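/- Fix s > 1 and define, for t > 0: f₄(t) = t·cos(t^{1/(s−1)})/sin(t^{1/(s−1)}) and f₂(t) = (s − 1)·t^{−s/(s−1)} − t^{−2}·f₄(t). Then lim_{t→0⁺} t^{s/(s−1)}·(f₂(t) + f₄(t)) = s − 2. In particular, for s > 2 the quantity f₂(t) + f₄(t) blows up to +∞ like (s − 2)t^{−s/(s−1)} as t → 0⁺, so the strict concavity of f₂ + f₄ required by the uniformly positive cost-sectional curvature condition As fails for the power cost c(x,y) = (1/s)d_{S²}(x,y)^s with s > 2, and the leading-order cancellation occurs only at s = 2. -/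

import Mathlib

open Real Set Filter

noncomputable section

lemma aux_xcot : Filter.Tendsto (fun x : ℝ => x * Real.cos x / Real.sin x)
    (nhdsWithin 0 (Set.Ioi 0)) (nhds 1) := by
  have hslope : Filter.Tendsto (fun x : ℝ => Real.sin x / x)
      (nhdsWithin 0 {(0:ℝ)}ᶜ) (nhds 1) := by
    have h := (Real.hasDerivAt_sin 0)
    rw [hasDerivAt_iff_tendsto_slope] at h
    simp only [Real.cos_zero] at h
    refine h.congr (fun x => ?_)
    simp [slope_def_field]
  have hslope' : Filter.Tendsto (fun x : ℝ => Real.sin x / x)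
      (nhdsWithin 0 (Set.Ioi 0)) (nhds 1) :=
    hslope.mono_left (nhdsWithin_mono _ (fun x hx => ne_of_gt hx))
  have hinv : Filter.Tendsto (fun x : ℝ => x / Real.sin x)
      (nhdsWithin 0 (Set.Ioi 0)) (nhds 1) := by
    have := hslope'.inv₀ one_ne_zero
    simp only [inv_div, inv_one] at this
    exact this
  have hcos : Filter.Tendsto (fun x : ℝ => Real.cos x)
      (nhdsWithin 0 (Set.Ioi 0)) (nhds 1) := by
    have := Real.continuous_cos.continuousAt (x := (0:ℝ))
    simpa [Real.cos_zero] using this.continuousWithinAt.tendsto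
  have := hcos.mul hinv
  simp only [one_mul] at this
  refine this.congr (fun x => ?_)
  ring

theorem stmt_18
    (s : ℝ) (hs : 1 < s)
    (f₄ f₂ : ℝ → ℝ)
    (hf₄ : ∀ t : ℝ, 0 < t →
        f₄ t = t * Real.cos (t ^ (1 / (s - 1))) / Real.sin (t ^ (1 / (s - 1))))
    (hf₂ : ∀ t : ℝ, 0 < t →
        f₂ t = (s - 1) * t ^ (-s / (s - 1)) - t ^ (-2 : ℝ) * f₄ t) :
    Filter.Tendsto (fun t : ℝ => t ^ (s / (s - 1)) * (f₂ t + f₄ t))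
      (nhdsWithin 0 (Set.Ioi 0)) (nhds (s - 2)) := by
  have hs1 : (0:ℝ) < s - 1 := by linarith
  have htu : Filter.Tendsto (fun t : ℝ => t ^ (1 / (s - 1)))
      (nhdsWithin 0 (Set.Ioi 0)) (nhdsWithin 0 (Set.Ioi 0)) := by
    rw [tendsto_nhdsWithin_iff]
    constructor
    · have hc : ContinuousAt (fun t : ℝ => t ^ (1 / (s - 1))) 0 := by
        apply Real.continuousAt_rpow_const
        right; positivity
      have h0 : (0:ℝ) ^ (1 / (s - 1)) = 0 := by
        rw [Real.zero_rpow]; positivity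
      have h2 := hc.tendsto
      rw [h0] at h2
      exact h2.mono_left nhdsWithin_le_nhds
    · filter_upwards [self_mem_nhdsWithin] with t ht
      exact Real.rpow_pos_of_pos ht _
  have hφ : Filter.Tendsto
      (fun t : ℝ => t ^ (1 / (s - 1)) * Real.cos (t ^ (1 / (s - 1))) / Real.sin (t ^ (1 / (s - 1))))
      (nhdsWithin 0 (Set.Ioi 0)) (nhds 1) := aux_xcot.comp htu
  have ht2 : Filter.Tendsto (fun t : ℝ => t ^ 2) (nhdsWithin 0 (Set.Ioi 0)) (nhds 0) := by
    have h3 : ContinuousAt (fun t : ℝ => t ^ 2) 0 := by fun_prop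
    simpa using h3.tendsto.mono_left nhdsWithin_le_nhds
  have hg : Filter.Tendsto
      (fun t : ℝ => (s - 1) - (t ^ (1 / (s - 1)) * Real.cos (t ^ (1 / (s - 1))) / Real.sin (t ^ (1 / (s - 1))))
        + t ^ 2 * (t ^ (1 / (s - 1)) * Real.cos (t ^ (1 / (s - 1))) / Real.sin (t ^ (1 / (s - 1)))))
      (nhdsWithin 0 (Set.Ioi 0)) (nhds (s - 2)) := by
    have h4 := ((tendsto_const_nhds (x := s - 1)).sub hφ).add (ht2.mul hφ)
    convert h4 using 2
    ring
  refine hg.congr' ?_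
  have hsin : ∀ᶠ t in nhdsWithin 0 (Set.Ioi 0), Real.sin (t ^ (1 / (s - 1))) ≠ 0 := by
    have hmem : Set.Ioo (0:ℝ) Real.pi ∈ nhdsWithin 0 (Set.Ioi 0) :=
      Ioo_mem_nhdsGT_of_mem ⟨le_rfl, Real.pi_pos⟩
    filter_upwards [htu.eventually hmem] with t ht
    exact ne_of_gt (Real.sin_pos_of_pos_of_lt_pi ht.1 ht.2)
  filter_upwards [hsin, self_mem_nhdsWithin] with t hsint ht
  have ht' : (0:ℝ) < t := ht
  have ha0 : 0 < t ^ (1 / (s - 1)) := Real.rpow_pos_of_pos ht' _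
  have hexp : s / (s - 1) = 1 + 1 / (s - 1) := by field_simp; ring
  have e1 : t ^ (s / (s - 1)) = t * t ^ (1 / (s - 1)) := by
    rw [hexp, Real.rpow_add ht', Real.rpow_one]
  have e2 : t ^ (-s / (s - 1)) = (t * t ^ (1 / (s - 1)))⁻¹ := by
    rw [neg_div, Real.rpow_neg ht'.le, e1]
  have e3 : t ^ (-2 : ℝ) = (t ^ 2)⁻¹ := by
    rw [Real.rpow_neg ht'.le, show ((2:ℝ)) = ((2:ℕ):ℝ) by norm_num, Real.rpow_natCast]
  rw [hf₂ t ht', hf₄ t ht', e1, e2, e3]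
  set a := t ^ (1 / (s - 1)) with hA
  field_simp
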